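/- arXiv:1810.03882 — 5 statements merged into one kernel-verified Lean document; each statement's English description precedes it below -/
import Mathlib

section
/- The minimum over states in an ε-ball (trace distance) of any coherence monotone fails strong monotonicity: there exist a state ρ, an incoherent-Kraus decomposition {K_k} with outcomes ρ_k and probabilities p_k, such that ∑_k p_k C_{ε,min}(ρ_k) > C_{ε,min}(ρ). Concretely, for ρ = η|0⟩⟨0|⊗ρ_c + (1−η)|1⟩⟨1|⊗δ with δ incoherent, ρ_c coherent with C_{ε,min}(ρ_c) > 0, and η ≤ ε, one has C_{ε,min}(ρ) = 0 while the post-measurement average equals η·C_{ε,min}(ρ_c) > 0. -/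
open scoped ComplexOrder

open scoped Kronecker BigOperators

open Matrix

/-- A density matrix: positive semidefinite with unit trace. -/
def IsDensity {n : Type*} [Fintype n] (A : Matrix n n ℂ) : Prop :=
  A.PosSemidef ∧ A.trace = 1

/-- The trace distance `½ Tr|ρ − τ|`. -/
noncomputable def traceDist {n : Type*} [Fintype n] [DecidableEq n]
    (ρ τ : Matrix n n ℂ) : ℝ :=
  (((Matrix.posSemidef_conjTranspose_mul_self (ρ - τ)).1.eigenvectorUnitary.1 *
      Matrix.diagonal (((↑) : ℝ → ℂ) ∘ Real.sqrt ∘ (Matrix.posSemidef_conjTranspose_mul_self (ρ - τ)).1.eigenvalues) *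
      (star (Matrix.posSemidef_conjTranspose_mul_self (ρ - τ)).1.eigenvectorUnitary :
        Matrix n n ℂ)).trace).re / 2

/-- The ε-smooth measure of coherence with respect to the trace distance. -/
noncomputable def CminQ {n : Type*} [Fintype n] [DecidableEq n]
    (C : Matrix n n ℂ → ℝ) (ε : ℝ) (ρ : Matrix n n ℂ) : ℝ :=
  sInf (C '' {τ | IsDensity τ ∧ traceDist ρ τ ≤ ε})

lemma kronCT {m n : Type*} [Fintype m] [Fintype n]
    (A : Matrix m m ℂ) (B : Matrix n n ℂ) : (A ⊗ₖ B)ᴴ = Aᴴ ⊗ₖ Bᴴ := by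
  ext ⟨i, j⟩ ⟨k, l⟩
  simp [Matrix.conjTranspose_apply, Matrix.kroneckerMap_apply, star_mul']

lemma stdCT (i : Fin 2) :
    (Matrix.single i i (1 : ℂ))ᴴ = Matrix.single i i 1 := by
  ext a b
  simp [Matrix.conjTranspose_apply, Matrix.single, and_comm, apply_ite (star : ℂ → ℂ)]

lemma stdDiag (i : Fin 2) : (Matrix.single i i (1 : ℂ)).IsDiag := by
  intro a b hab
  simp only [Matrix.single, Matrix.of_apply, ite_eq_right_iff]
  rintro ⟨rfl, rfl⟩
  exact absurd rfl hab

lemma stdTr (i : Fin 2) : (Matrix.single i i (1 : ℂ)).trace = 1 := by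
  simp [Matrix.trace, Matrix.diag, Matrix.single, Finset.sum_ite_eq]

lemma kronNeg {m n : Type*} [Fintype m] [Fintype n]
    (A : Matrix m m ℂ) (B : Matrix n n ℂ) : A ⊗ₖ (-B) = -(A ⊗ₖ B) := by
  ext ⟨i, j⟩ ⟨k, l⟩
  simp [Matrix.kroneckerMap_apply, mul_neg]

lemma e00 : (Matrix.single 0 0 1 : Matrix (Fin 2) (Fin 2) ℂ) * (Matrix.single 0 0 1 : Matrix (Fin 2) (Fin 2) ℂ) =
    Matrix.single 0 0 1 := by
  rw [Matrix.single_mul_single_same, one_mul]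

lemma e11' : (Matrix.single 1 1 1 : Matrix (Fin 2) (Fin 2) ℂ) * (Matrix.single 1 1 1 : Matrix (Fin 2) (Fin 2) ℂ) =
    Matrix.single 1 1 1 := by
  rw [Matrix.single_mul_single_same, one_mul]

lemma e01 : (Matrix.single 0 0 1 : Matrix (Fin 2) (Fin 2) ℂ) * (Matrix.single 1 1 1 : Matrix (Fin 2) (Fin 2) ℂ) = 0 :=
  Matrix.single_mul_single_of_ne _ _ _ _ (by decide) _

lemma e10 : (Matrix.single 1 1 1 : Matrix (Fin 2) (Fin 2) ℂ) * (Matrix.single 0 0 1 : Matrix (Fin 2) (Fin 2) ℂ) = 0 :=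
  Matrix.single_mul_single_of_ne _ _ _ _ (by decide) _

lemma blockMul {d : ℕ} (A0 A1 B0 B1 : Matrix (Fin d) (Fin d) ℂ) :
    ((Matrix.single 0 0 1 : Matrix (Fin 2) (Fin 2) ℂ) ⊗ₖ A0 +
        (Matrix.single 1 1 1 : Matrix (Fin 2) (Fin 2) ℂ) ⊗ₖ A1) *
      ((Matrix.single 0 0 1 : Matrix (Fin 2) (Fin 2) ℂ) ⊗ₖ B0 +
        (Matrix.single 1 1 1 : Matrix (Fin 2) (Fin 2) ℂ) ⊗ₖ B1) =
    (Matrix.single 0 0 1 : Matrix (Fin 2) (Fin 2) ℂ) ⊗ₖ (A0 * B0) +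
      (Matrix.single 1 1 1 : Matrix (Fin 2) (Fin 2) ℂ) ⊗ₖ (A1 * B1) := by
  rw [add_mul, mul_add, mul_add, ← Matrix.mul_kronecker_mul, ← Matrix.mul_kronecker_mul,
    ← Matrix.mul_kronecker_mul, ← Matrix.mul_kronecker_mul, e00, e11', e01, e10,
    Matrix.zero_kronecker, Matrix.zero_kronecker, add_zero, zero_add]

lemma blockCT {d : ℕ} (A0 A1 : Matrix (Fin d) (Fin d) ℂ) :
    ((Matrix.single 0 0 1 : Matrix (Fin 2) (Fin 2) ℂ) ⊗ₖ A0 +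
        (Matrix.single 1 1 1 : Matrix (Fin 2) (Fin 2) ℂ) ⊗ₖ A1)ᴴ =
    (Matrix.single 0 0 1 : Matrix (Fin 2) (Fin 2) ℂ) ⊗ₖ A0ᴴ +
      (Matrix.single 1 1 1 : Matrix (Fin 2) (Fin 2) ℂ) ⊗ₖ A1ᴴ := by
  rw [Matrix.conjTranspose_add, kronCT, kronCT, stdCT 0, stdCT 1]

open scoped MatrixOrder in
lemma blockPSD {d : ℕ} {A0 A1 : Matrix (Fin d) (Fin d) ℂ}
    (h0 : A0.PosSemidef) (h1 : A1.PosSemidef) :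
    ((Matrix.single 0 0 1 : Matrix (Fin 2) (Fin 2) ℂ) ⊗ₖ A0 +
      (Matrix.single 1 1 1 : Matrix (Fin 2) (Fin 2) ℂ) ⊗ₖ A1).PosSemidef := by
  obtain ⟨B0, rfl⟩ := CStarAlgebra.nonneg_iff_eq_star_mul_self.mp h0.nonneg
  obtain ⟨B1, rfl⟩ := CStarAlgebra.nonneg_iff_eq_star_mul_self.mp h1.nonneg
  simp only [Matrix.star_eq_conjTranspose]
  rw [← blockMul B0ᴴ B1ᴴ B0 B1, ← blockCT]
  exact Matrix.posSemidef_conjTranspose_mul_self _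

open scoped MatrixOrder in
lemma psdSmul {n : Type*} [Fintype n] [DecidableEq n] {M : Matrix n n ℂ}
    (hM : M.PosSemidef) {r : ℝ} (hr : 0 ≤ r) : ((r : ℂ) • M).PosSemidef := by
  obtain ⟨B, rfl⟩ := CStarAlgebra.nonneg_iff_eq_star_mul_self.mp hM.nonneg
  simp only [Matrix.star_eq_conjTranspose]
  have h : (r : ℂ) • (Bᴴ * B) =
      (((Real.sqrt r : ℝ) : ℂ) • B)ᴴ * (((Real.sqrt r : ℝ) : ℂ) • B) := by
    rw [Matrix.conjTranspose_smul, Matrix.smul_mul, Matrix.mul_smul, smul_smul]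
    congr 1
    rw [Complex.star_def, Complex.conj_ofReal, ← Complex.ofReal_mul, Real.mul_self_sqrt hr]
  rw [h]
  exact Matrix.posSemidef_conjTranspose_mul_self _

/-- The ε-smooth measure of coherence fails strong monotonicity: for
`ρ = η|0⟩⟨0|⊗ρ_c + (1−η)|1⟩⟨1|⊗δ` with `δ` incoherent and `η ≤ ε`, one has
`C_{ε,min}(ρ) = 0`, while the average over the outcomes of the incoherent
measurement `{|0⟩⟨0|⊗I, |1⟩⟨1|⊗I}` equals `η·C_{ε,min}(|0⟩⟨0|⊗ρ_c) > 0`. -/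
theorem epsilon_smooth_coherence_no_strong_monotonicity
    {d : ℕ} (C : Matrix (Fin 2 × Fin d) (Fin 2 × Fin d) ℂ → ℝ)
    (hCnn : ∀ τ, 0 ≤ C τ)
    -- C vanishes on incoherent (diagonal) states
    (hC0 : ∀ τ, Matrix.IsDiag τ → C τ = 0)
    (ρc δ : Matrix (Fin d) (Fin d) ℂ)
    (hρc : IsDensity ρc) (hδ : IsDensity δ) (hδdiag : Matrix.IsDiag δ)
    (η ε : ℝ) (hη0 : 0 < η) (hη1 : η ≤ 1) (hηε : η ≤ ε)
    (e0 e1 : Matrix (Fin 2) (Fin 2) ℂ)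
    (he0 : e0 = Matrix.single 0 0 1)
    (he1 : e1 = Matrix.single 1 1 1)
    (ρ : Matrix (Fin 2 × Fin d) (Fin 2 × Fin d) ℂ)
    (hρ : ρ = (η : ℂ) • (e0 ⊗ₖ ρc) + ((1 - η : ℝ) : ℂ) • (e1 ⊗ₖ δ))
    -- ρ_c is coherent enough: C_{ε,min}(|0⟩⟨0|⊗ρ_c) > 0
    (hcoh : 0 < CminQ C ε (e0 ⊗ₖ ρc)) :
    CminQ C ε ρ = 0 ∧
      CminQ C ε ρ <
        η * CminQ C ε (e0 ⊗ₖ ρc) + (1 - η) * CminQ C ε (e1 ⊗ₖ δ) := by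
  subst he0 he1 hρ
  obtain ⟨hρc_psd, hρc_tr⟩ := hρc
  obtain ⟨hδ_psd, hδ_tr⟩ := hδ
  set A : Matrix (Fin 2) (Fin 2) ℂ := Matrix.single 0 0 1 with hA
  set B : Matrix (Fin 2) (Fin 2) ℂ := Matrix.single 1 1 1 with hB
  set ρ : Matrix (Fin 2 × Fin d) (Fin 2 × Fin d) ℂ :=
    (η : ℂ) • (A ⊗ₖ ρc) + ((1 - η : ℝ) : ℂ) • (B ⊗ₖ δ) with hρ
  set τ : Matrix (Fin 2 × Fin d) (Fin 2 × Fin d) ℂ := B ⊗ₖ δ with hτ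
  -- τ is a density matrix
  have hτ_psd : τ.PosSemidef := by
    have := blockPSD (Matrix.PosSemidef.zero (n := Fin d)) hδ_psd
    rwa [Matrix.kronecker_zero, zero_add] at this
  have hτ_tr : τ.trace = 1 := by
    rw [hτ, Matrix.trace_kronecker, hB, stdTr, one_mul, hδ_tr]
  -- the trace distance from ρ to τ equals η
  have hNeq : ρ - τ = (η : ℂ) • (A ⊗ₖ ρc + B ⊗ₖ (-δ)) := by
    rw [hρ, hτ, kronNeg]
    push_cast
    module
  have hblockH : (A ⊗ₖ ρc + B ⊗ₖ (-δ))ᴴ = A ⊗ₖ ρc + B ⊗ₖ (-δ) := by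
    rw [hA, hB, blockCT, hρc_psd.1.eq, Matrix.conjTranspose_neg, hδ_psd.1.eq]
  have hS_psd : ((η : ℂ) • (A ⊗ₖ ρc + B ⊗ₖ δ)).PosSemidef :=
    psdSmul (blockPSD hρc_psd hδ_psd) hη0.le
  have hsq : ((η : ℂ) • (A ⊗ₖ ρc + B ⊗ₖ δ)) ^ 2 = (ρ - τ)ᴴ * (ρ - τ) := by
    rw [hNeq, Matrix.conjTranspose_smul, hblockH, pow_two,
      Matrix.smul_mul, Matrix.mul_smul, Matrix.smul_mul, Matrix.mul_smul,
      hA, hB, blockMul, blockMul, neg_mul_neg, smul_smul, smul_smul]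
    congr 2
    rw [Complex.star_def, Complex.conj_ofReal]
  have hsqrt : ((Matrix.posSemidef_conjTranspose_mul_self (ρ - τ)).1.eigenvectorUnitary.1 *
      Matrix.diagonal (((↑) : ℝ → ℂ) ∘ Real.sqrt ∘ (Matrix.posSemidef_conjTranspose_mul_self (ρ - τ)).1.eigenvalues) *
      (star (Matrix.posSemidef_conjTranspose_mul_self (ρ - τ)).1.eigenvectorUnitary :
        Matrix (Fin 2 × Fin d) (Fin 2 × Fin d) ℂ)) =
      (η : ℂ) • (A ⊗ₖ ρc + B ⊗ₖ δ) := by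
    have h := (Matrix.posSemidef_conjTranspose_mul_self (ρ - τ)).1.cfc_eq Real.sqrt
    rw [Matrix.IsHermitian.cfc, Unitary.conjStarAlgAut_apply] at h
    refine h.symm.trans ?_
    rw [← hsq]
    refine Eq.trans (cfc_comp_pow (R := ℝ) (p := IsSelfAdjoint) Real.sqrt 2 _ (ha := hS_psd.1)).symm ?_
    rw [cfc_congr (g := id) (a := (η : ℂ) • (A ⊗ₖ ρc + B ⊗ₖ δ))]
    · exact cfc_id (p := IsSelfAdjoint) ℝ _ hS_psd.1
    intro x hx
    have hx0 : 0 ≤ x := by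
      rw [hS_psd.1.spectrum_real_eq_range_eigenvalues] at hx
      obtain ⟨i, rfl⟩ := hx
      exact hS_psd.eigenvalues_nonneg i
    exact Real.sqrt_sq hx0
  have hdist : traceDist ρ τ = η := by
    rw [traceDist, hsqrt, Matrix.trace_smul, Matrix.trace_add,
      Matrix.trace_kronecker, Matrix.trace_kronecker, hA, hB, stdTr, stdTr,
      hρc_tr, hδ_tr]
    simp
    ring
  -- τ is incoherent
  have hτ_diag : τ.IsDiag := Matrix.IsDiag.kronecker (stdDiag 1) hδdiag
  have hCτ : C τ = 0 := hC0 τ hτ_diag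
  -- CminQ ρ = 0
  have hmem : C τ ∈ C '' {σ | IsDensity σ ∧ traceDist ρ σ ≤ ε} :=
    ⟨τ, ⟨⟨hτ_psd, hτ_tr⟩, by rw [hdist]; exact hηε⟩, rfl⟩
  have hbdd : BddBelow (C '' {σ | IsDensity σ ∧ traceDist ρ σ ≤ ε}) := by
    refine ⟨0, ?_⟩
    rintro x ⟨σ, -, rfl⟩
    exact hCnn σ
  have hle : CminQ C ε ρ ≤ 0 := by
    have := csInf_le hbdd hmem
    rwa [hCτ] at this
  have hge : 0 ≤ CminQ C ε ρ :=
    Real.sInf_nonneg (by rintro x ⟨σ, -, rfl⟩; exact hCnn σ)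
  have hzero : CminQ C ε ρ = 0 := le_antisymm hle hge
  refine ⟨hzero, ?_⟩
  rw [hzero]
  have h2 : 0 ≤ CminQ C ε (B ⊗ₖ δ) :=
    Real.sInf_nonneg (by rintro x ⟨σ, -, rfl⟩; exact hCnn σ)
  have h3 : 0 < η * CminQ C ε (A ⊗ₖ ρc) := mul_pos hη0 hcoh
  nlinarith [mul_nonneg (sub_nonneg.2 hη1) h2]
end

section
/- Let C be a convex coherence measure (vanishing on incoherent states), D a convex distance with triangle inequality, and C_D(ρ) = min_{δ∈ℐ} D(ρ,δ) ≥ ε. Then the ε-smooth quantifier satisfies the upper bound C_{ε,min}(ρ) ≤ (1 − ε/C_D(ρ)) · C(ρ). -/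
/-- The ε-smooth measure of coherence. -/
noncomputable def Cmin {V : Type*} (𝒟 : Set V) (D : V → V → ℝ) (C : V → ℝ)
    (ε : ℝ) (ρ : V) : ℝ :=
  sInf (C '' {τ | τ ∈ 𝒟 ∧ D ρ τ ≤ ε})

/-- The distance-based coherence quantifier `C_D(ρ) = inf_{δ∈ℐ} D(ρ,δ)`. -/
noncomputable def CD {V : Type*} (ℐ : Set V) (D : V → V → ℝ) (ρ : V) : ℝ :=
  sInf (D ρ '' ℐ)

/-- Upper bound: `C_{ε,min}(ρ) ≤ (1 − ε/C_D(ρ))·C(ρ)` whenever `ε ≤ C_D(ρ)`. -/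
theorem epsilon_smooth_coherence_upper_bound
    {V : Type*} [AddCommGroup V] [Module ℝ V]
    (𝒟 ℐ : Set V) (hconv : Convex ℝ 𝒟) (hIsub : ℐ ⊆ 𝒟) (hIne : ℐ.Nonempty)
    (D : V → V → ℝ) (C : V → ℝ)
    (hDnn : ∀ ρ τ, 0 ≤ D ρ τ)
    (hDsymm : ∀ ρ τ, D ρ τ = D τ ρ)
    (hDtri : ∀ ρ σ τ, D ρ τ ≤ D ρ σ + D σ τ)
    (hDrefl : ∀ ρ, D ρ ρ = 0)
    -- convexity of D in each argument
    (hDconv1 : ∀ lam : ℝ, 0 ≤ lam → lam ≤ 1 → ∀ ρ₁ ρ₂ δ : V,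
      D (lam • ρ₁ + (1 - lam) • ρ₂) δ ≤ lam * D ρ₁ δ + (1 - lam) * D ρ₂ δ)
    (hDconv2 : ∀ lam : ℝ, 0 ≤ lam → lam ≤ 1 → ∀ ρ τ σ : V,
      D ρ (lam • τ + (1 - lam) • σ) ≤ lam * D ρ τ + (1 - lam) * D ρ σ)
    (hCnn : ∀ ρ ∈ 𝒟, 0 ≤ C ρ)
    (hCconv : ConvexOn ℝ 𝒟 C)
    -- C vanishes on incoherent states
    (hC0 : ∀ δ ∈ ℐ, C δ = 0)
    (ρ : V) (hρ : ρ ∈ 𝒟)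
    -- C_D(ρ) is attained at some incoherent state
    (δstar : V) (hδstar : δstar ∈ ℐ) (hopt : D ρ δstar = CD ℐ D ρ)
    (ε : ℝ) (hε : 0 < ε) (hεCD : ε ≤ CD ℐ D ρ) :
    Cmin 𝒟 D C ε ρ ≤ (1 - ε / CD ℐ D ρ) * C ρ := by
  set cd := CD ℐ D ρ with hcd
  have hcdpos : 0 < cd := lt_of_lt_of_le hε hεCD
  set p : ℝ := ε / cd with hp
  have hp0 : 0 ≤ p := le_of_lt (div_pos hε hcdpos)
  have hp1 : p ≤ 1 := (div_le_one hcdpos).mpr hεCD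
  set τ := (1 - p) • ρ + p • δstar with hτ
  have hτ𝒟 : τ ∈ 𝒟 := hconv hρ (hIsub hδstar) (by linarith) hp0 (by ring)
  have hDτ : D ρ τ ≤ ε := by
    have := hDconv2 (1 - p) (by linarith) (by linarith) ρ ρ δstar
    rw [show (1 - (1 - p)) = p by ring] at this
    calc D ρ τ ≤ (1 - p) * D ρ ρ + p * D ρ δstar := this
    _ = p * cd := by rw [hDrefl, hopt]; ring
    _ = ε := by rw [hp]; exact div_mul_cancel₀ ε hcdpos.ne'
  have hCτ : C τ ≤ (1 - p) * C ρ := by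
    have := hCconv.2 hρ (hIsub hδstar) (by linarith : (0:ℝ) ≤ 1 - p) hp0 (by ring)
    rw [hC0 δstar hδstar] at this
    simpa using this
  have hbdd : BddBelow (C '' {τ | τ ∈ 𝒟 ∧ D ρ τ ≤ ε}) := by
    refine ⟨0, ?_⟩
    rintro x ⟨y, ⟨hy, _⟩, rfl⟩
    exact hCnn y hy
  have hmem : C τ ∈ C '' {τ | τ ∈ 𝒟 ∧ D ρ τ ≤ ε} := ⟨τ, ⟨hτ𝒟, hDτ⟩, rfl⟩
  calc Cmin 𝒟 D C ε ρ ≤ C τ := csInf_le hbdd hmem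
  _ ≤ (1 - p) * C ρ := hCτ
  _ = (1 - ε / cd) * C ρ := by rw [hp]
end

section
/- If C = C_D is itself the distance-based coherence quantifier and ε ≤ C_D(ρ), then the ε-smooth version satisfies the exact identity C_D(ρ) = (C_D)_{ε,min}(ρ) + ε, where the smoothing is with respect to the same distance D. -/
/-- The ε-smooth version of the distance-based coherence quantifier itself. -/
noncomputable def CDmin {V : Type*} (𝒟 ℐ : Set V) (D : V → V → ℝ)
    (ε : ℝ) (ρ : V) : ℝ :=
  sInf (CD ℐ D '' {τ | τ ∈ 𝒟 ∧ D ρ τ ≤ ε})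

/-- Exact identity `C_D(ρ) = (C_D)_{ε,min}(ρ) + ε` for `ε ≤ C_D(ρ)`. -/
theorem epsilon_smooth_distance_coherence_identity
    {V : Type*} [AddCommGroup V] [Module ℝ V]
    (𝒟 ℐ : Set V) (hconv : Convex ℝ 𝒟) (hIsub : ℐ ⊆ 𝒟) (hIne : ℐ.Nonempty)
    (D : V → V → ℝ)
    (hDnn : ∀ ρ τ, 0 ≤ D ρ τ)
    (hDsymm : ∀ ρ τ, D ρ τ = D τ ρ)
    (hDtri : ∀ ρ σ τ, D ρ τ ≤ D ρ σ + D σ τ)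
    (hDrefl : ∀ ρ, D ρ ρ = 0)
    -- convexity of D in each argument
    (hDconv1 : ∀ lam : ℝ, 0 ≤ lam → lam ≤ 1 → ∀ ρ₁ ρ₂ δ : V,
      D (lam • ρ₁ + (1 - lam) • ρ₂) δ ≤ lam * D ρ₁ δ + (1 - lam) * D ρ₂ δ)
    (hDconv2 : ∀ lam : ℝ, 0 ≤ lam → lam ≤ 1 → ∀ ρ τ σ : V,
      D ρ (lam • τ + (1 - lam) • σ) ≤ lam * D ρ τ + (1 - lam) * D ρ σ)
    (ρ : V) (hρ : ρ ∈ 𝒟)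
    -- C_D(ρ) is attained at some incoherent state δ*
    (δstar : V) (hδstar : δstar ∈ ℐ) (hopt : D ρ δstar = CD ℐ D ρ)
    -- the minimum over the ε-ball is attained
    (ε : ℝ) (hε0 : 0 ≤ ε) (hεCD : ε ≤ CD ℐ D ρ)
    (hattain : ∃ τ, τ ∈ 𝒟 ∧ D ρ τ ≤ ε ∧ CD ℐ D τ = CDmin 𝒟 ℐ D ε ρ) :
    CD ℐ D ρ = CDmin 𝒟 ℐ D ε ρ + ε := by
  have hne : ∀ τ : V, (D τ '' ℐ).Nonempty := fun τ => hIne.image _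
  have hbdd : ∀ τ : V, BddBelow (D τ '' ℐ) := by
    intro τ
    exact ⟨0, fun x ⟨δ, _, hx⟩ => hx ▸ hDnn τ δ⟩
  have hCDle : ∀ τ δ, δ ∈ ℐ → CD ℐ D τ ≤ D τ δ := fun τ δ hδ =>
    csInf_le (hbdd τ) ⟨δ, hδ, rfl⟩
  have hCDge : ∀ (τ : V) (b : ℝ), (∀ δ ∈ ℐ, b ≤ D τ δ) → b ≤ CD ℐ D τ := by
    intro τ b h
    exact le_csInf (hne τ) (fun x ⟨δ, hδ, hx⟩ => hx ▸ h δ hδ)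
  have hCDnn : ∀ τ, 0 ≤ CD ℐ D τ := fun τ => hCDge τ 0 (fun δ _ => hDnn τ δ)
  -- lower bound on CDmin
  have hball_ne : (CD ℐ D '' {τ | τ ∈ 𝒟 ∧ D ρ τ ≤ ε}).Nonempty :=
    ⟨CD ℐ D ρ, ρ, ⟨hρ, by rw [hDrefl]; exact hε0⟩, rfl⟩
  have hlow : CD ℐ D ρ - ε ≤ CDmin 𝒟 ℐ D ε ρ := by
    apply le_csInf hball_ne
    rintro x ⟨τ, ⟨hτ𝒟, hτε⟩, rfl⟩
    apply hCDge
    intro δ hδ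
    have h1 : CD ℐ D ρ ≤ D ρ δ := hCDle ρ δ hδ
    have h2 : D ρ δ ≤ D ρ τ + D τ δ := hDtri ρ τ δ
    linarith
  have hball_bdd : BddBelow (CD ℐ D '' {τ | τ ∈ 𝒟 ∧ D ρ τ ≤ ε}) :=
    ⟨0, fun x ⟨τ, _, hx⟩ => hx ▸ hCDnn τ⟩
  -- upper bound on CDmin
  have hup : CDmin 𝒟 ℐ D ε ρ ≤ CD ℐ D ρ - ε := by
    rcases eq_or_lt_of_le (hCDnn ρ) with h0 | h0
    · -- CD ρ = 0 forces ε = 0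
      have hε : ε = 0 := le_antisymm (by linarith) hε0
      have : CDmin 𝒟 ℐ D ε ρ ≤ CD ℐ D ρ :=
        csInf_le hball_bdd ⟨ρ, ⟨hρ, by rw [hDrefl]; exact hε0⟩, rfl⟩
      linarith
    · set C := CD ℐ D ρ with hC
      set p : ℝ := ε / C with hp
      have hp0 : 0 ≤ p := div_nonneg hε0 (le_of_lt h0)
      have hp1 : p ≤ 1 := (div_le_one h0).2 hεCD
      set τ := p • δstar + (1 - p) • ρ with hτ
      have hτ𝒟 : τ ∈ 𝒟 := hconv (hIsub hδstar) hρ hp0 (by linarith) (by ring)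
      have hpC : p * C = ε := div_mul_cancel₀ ε (ne_of_gt h0)
      have hτε : D ρ τ ≤ ε := by
        have := hDconv2 p hp0 hp1 ρ δstar ρ
        rw [hDrefl ρ, hopt] at this
        calc D ρ τ ≤ p * C + (1 - p) * 0 := this
          _ = ε := by rw [hpC]; ring
      have hτCD : CD ℐ D τ ≤ C - ε := by
        have h1 : CD ℐ D τ ≤ D τ δstar := hCDle τ δstar hδstar
        have h2 := hDconv1 p hp0 hp1 δstar ρ δstar
        rw [hDrefl δstar, hopt] at h2
        have : D τ δstar ≤ p * 0 + (1 - p) * C := h2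
        calc CD ℐ D τ ≤ p * 0 + (1 - p) * C := le_trans h1 this
          _ = C - ε := by rw [mul_zero, zero_add, sub_mul, one_mul, hpC]
      calc CDmin 𝒟 ℐ D ε ρ ≤ CD ℐ D τ := csInf_le hball_bdd ⟨τ, ⟨hτ𝒟, hτε⟩, rfl⟩
        _ ≤ CD ℐ D ρ - ε := hτCD
  linarith
end

section
/- The ε-smooth relative entropy of coherence C_{r,ε}(ρ) = min{ C_r(τ) : S(ρ‖τ) ≤ ε } satisfies C_{r,ε}(ρ) ≤ C_r(ρ) − ε whenever C_r(ρ) ≥ ε, where C_r(ρ) = min_{δ∈ℐ} S(ρ‖δ) is the relative entropy of coherence. -/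
open scoped ComplexOrder

/-- The relative entropy of coherence `C_r(ρ) = min_{δ∈ℐ} S(ρ‖δ)`,
where `ℐ` is the set of diagonal (incoherent) density matrices. -/
noncomputable def Cr {d : ℕ}
    (S : Matrix (Fin d) (Fin d) ℂ → Matrix (Fin d) (Fin d) ℂ → ℝ)
    (ρ : Matrix (Fin d) (Fin d) ℂ) : ℝ :=
  sInf (S ρ '' {δ | IsDensity δ ∧ δ.IsDiag})

/-- The ε-smooth relative entropy of coherence
`C_{r,ε}(ρ) = min{C_r(τ) : S(ρ‖τ) ≤ ε}`. -/
noncomputable def Creps {d : ℕ}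
    (S : Matrix (Fin d) (Fin d) ℂ → Matrix (Fin d) (Fin d) ℂ → ℝ)
    (ε : ℝ) (ρ : Matrix (Fin d) (Fin d) ℂ) : ℝ :=
  sInf (Cr S '' {τ | IsDensity τ ∧ S ρ τ ≤ ε})

lemma posSemidef_real_smul {n : Type*} [Fintype n] {M : Matrix n n ℂ}
    (hM : M.PosSemidef) {c : ℝ} (hc : 0 ≤ c) : (c • M).PosSemidef := by
  constructor
  · show (c • M).conjTranspose = c • M
    rw [Matrix.conjTranspose_smul, star_trivial, hM.1.eq]
  · intro x
    have h := hM.2 x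
    have e : (x.sum fun i xi => x.sum fun j xj => star xi * (c • M) i j * xj)
        = (c : ℂ) * (x.sum fun i xi => x.sum fun j xj => star xi * M i j * xj) := by
      simp only [Finsupp.sum, Finset.mul_sum, Matrix.smul_apply, Complex.real_smul]
      exact Finset.sum_congr rfl fun i _ => Finset.sum_congr rfl fun j _ => by ring
    rw [e]
    exact mul_nonneg (by exact_mod_cast hc) h

lemma isDensity_mix {n : Type*} [Fintype n] {A B : Matrix n n ℂ}
    (hA : IsDensity A) (hB : IsDensity B) {p : ℝ} (hp0 : 0 ≤ p) (hp1 : p ≤ 1) :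
    IsDensity ((1 - p) • A + p • B) := by
  constructor
  · exact (posSemidef_real_smul hA.1 (by linarith)).add (posSemidef_real_smul hB.1 hp0)
  · rw [Matrix.trace_add, Matrix.trace_smul, Matrix.trace_smul, hA.2, hB.2]
    simp [Complex.real_smul, ← Complex.ofReal_add]

lemma Cr_nonneg {d : ℕ}
    (S : Matrix (Fin d) (Fin d) ℂ → Matrix (Fin d) (Fin d) ℂ → ℝ)
    (hSnn : ∀ ρ τ, 0 ≤ S ρ τ) (ρ : Matrix (Fin d) (Fin d) ℂ) : 0 ≤ Cr S ρ := by
  apply Real.sInf_nonneg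
  rintro x ⟨δ, _, rfl⟩
  exact hSnn _ _

/-- `C_{r,ε}(ρ) ≤ C_r(ρ) − ε` whenever `C_r(ρ) ≥ ε`. -/
theorem epsilon_smooth_relative_entropy_coherence_bound
    {d : ℕ} (S : Matrix (Fin d) (Fin d) ℂ → Matrix (Fin d) (Fin d) ℂ → ℝ)
    (hSnn : ∀ ρ τ, 0 ≤ S ρ τ)
    (hself : ∀ ρ, S ρ ρ = 0)
    -- joint convexity of the relative entropy (pairwise form)
    (hjoint : ∀ p : ℝ, 0 ≤ p → p ≤ 1 →
      ∀ ρ₁ ρ₂ σ₁ σ₂ : Matrix (Fin d) (Fin d) ℂ,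
      S ((1 - p) • ρ₁ + p • ρ₂) ((1 - p) • σ₁ + p • σ₂)
        ≤ (1 - p) * S ρ₁ σ₁ + p * S ρ₂ σ₂)
    (ρ : Matrix (Fin d) (Fin d) ℂ) (hρ : IsDensity ρ)
    -- the minimum defining C_r(ρ) is attained at δ*
    (δstar : Matrix (Fin d) (Fin d) ℂ)
    (hδstar : IsDensity δstar ∧ δstar.IsDiag)
    (hopt : S ρ δstar = Cr S ρ)
    (ε : ℝ) (hε0 : 0 < ε) (hεCr : ε ≤ Cr S ρ) :
    Creps S ε ρ ≤ Cr S ρ - ε := by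
  have hCrpos : 0 < Cr S ρ := lt_of_lt_of_le hε0 hεCr
  set p : ℝ := ε / Cr S ρ with hp
  have hp0 : 0 ≤ p := le_of_lt (div_pos hε0 hCrpos)
  have hp1 : p ≤ 1 := (div_le_one hCrpos).mpr hεCr
  set τ := (1 - p) • ρ + p • δstar with hτ
  have hτdens : IsDensity τ := isDensity_mix hρ hδstar.1 hp0 hp1
  -- S ρ τ ≤ ε
  have hmixρ : (1 - p) • ρ + p • ρ = ρ := by
    rw [← add_smul]; simp
  have hSρτ : S ρ τ ≤ ε := by
    have h := hjoint p hp0 hp1 ρ ρ ρ δstar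
    rw [hmixρ, hself, hopt] at h
    have : p * Cr S ρ = ε := div_mul_cancel₀ ε (ne_of_gt hCrpos)
    calc S ρ τ ≤ (1 - p) * 0 + p * Cr S ρ := h
      _ = ε := by rw [this]; ring
  -- Cr τ ≤ Cr ρ - ε
  have hmixδ : (1 - p) • δstar + p • δstar = δstar := by
    rw [← add_smul]; simp
  have hSτδ : S τ δstar ≤ Cr S ρ - ε := by
    have h := hjoint p hp0 hp1 ρ δstar δstar δstar
    rw [hmixδ, hself, hopt] at h
    have hpe : p * Cr S ρ = ε := div_mul_cancel₀ ε (ne_of_gt hCrpos)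
    calc S τ δstar ≤ (1 - p) * Cr S ρ + p * 0 := h
      _ = Cr S ρ - ε := by rw [sub_mul, one_mul, hpe]; ring
  have hCrτ : Cr S τ ≤ Cr S ρ - ε := by
    refine le_trans (csInf_le ?_ ?_) hSτδ
    · exact ⟨0, by rintro x ⟨δ, _, rfl⟩; exact hSnn _ _⟩
    · exact ⟨δstar, hδstar, rfl⟩
  refine le_trans (csInf_le ?_ ?_) hCrτ
  · exact ⟨0, by rintro x ⟨σ, _, rfl⟩; exact Cr_nonneg S hSnn σ⟩
  · exact ⟨τ, ⟨hτdens, hSρτ⟩, rfl⟩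
end

section
/- The dual ε-smooth quantifier upper-bounds one-shot coherence distillation: if C_{d,Λ}^{(1),ε}(ρ) = max_Λ { C(Ψ_M) : D(Λ(ρ), Ψ_M) ≤ ε } over incoherent operations Λ satisfying B_ε(Λ(ρ)) ⊆ {Λ(τ) : τ ∈ B_ε(ρ)}, then C_{d,Λ}^{(1),ε}(ρ) ≤ C_{ε,max}(ρ) = max_{τ∈B_ε(ρ)} C(τ). -/
/-- The dual ε-smooth measure of coherence (maximization over the ε-ball). -/
noncomputable def Cmax {S : Type*} (D : S → S → ℝ) (C : S → ℝ) (ε : ℝ) (ρ : S) : ℝ :=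
  sSup (C '' {τ | D ρ τ ≤ ε})

/-- One-shot coherence distillation under a class `ops` of incoherent operations:
`C_{d,Λ}^{(1),ε}(ρ) = max_Λ {C(Ψ_M) : D(Λ(ρ),Ψ_M) ≤ ε}`,
where `Ψ M` is the rank-`M` maximally coherent state. -/
noncomputable def oneShotDistill {S : Type*} (D : S → S → ℝ) (C : S → ℝ)
    (ops : Set (S → S)) (Ψ : ℕ → S) (ε : ℝ) (ρ : S) : ℝ :=
  sSup {c | ∃ Λ ∈ ops, ∃ M : ℕ, c = C (Ψ M) ∧ D (Λ ρ) (Ψ M) ≤ ε}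

theorem dual_epsilon_smooth_bounds_one_shot_distillation
    {S : Type*} (D : S → S → ℝ) (C : S → ℝ)
    (hCnn : ∀ σ, 0 ≤ C σ)
    (ops : Set (S → S)) (Ψ : ℕ → S)
    -- each allowed operation is incoherent: C is monotone under it
    (hCmono : ∀ Λ ∈ ops, ∀ σ, C (Λ σ) ≤ C σ)
    (ρ : S) (ε : ℝ)
    -- ball-image hypothesis for each allowed operation
    (hball : ∀ Λ ∈ ops, {τ | D (Λ ρ) τ ≤ ε} ⊆ Λ '' {τ | D ρ τ ≤ ε})
    -- suprema are attained / bounded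
    (hattain : ∀ Λ ∈ ops, ∃ τ, D (Λ ρ) τ ≤ ε ∧ C τ = Cmax D C ε (Λ ρ))
    (hbdd : BddAbove (C '' {τ | D ρ τ ≤ ε}))
    (hne : (C '' {τ | D ρ τ ≤ ε}).Nonempty) :
    oneShotDistill D C ops Ψ ε ρ ≤ Cmax D C ε ρ := by
  have hCmax0 : 0 ≤ Cmax D C ε ρ := by
    obtain ⟨x, hx⟩ := hne
    obtain ⟨τ, hτ, rfl⟩ := hx
    exact le_trans (hCnn τ) (le_csSup hbdd ⟨τ, hτ, rfl⟩)
  apply Real.sSup_le _ hCmax0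
  rintro c ⟨Λ, hΛ, M, rfl, hD⟩
  obtain ⟨τ, hτ, hτΨ⟩ := hball Λ hΛ hD
  calc C (Ψ M) = C (Λ τ) := by rw [hτΨ]
    _ ≤ C τ := hCmono Λ hΛ τ
    _ ≤ Cmax D C ε ρ := le_csSup hbdd ⟨τ, hτ, rfl⟩
end
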